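/- Let S ⊂ ℝ² be a convex open subset of the open upper half-disk B₁⁺ whose boundary, intersected with ∂B₁⁺, contains no arc of positive length on the upper semicircle ∂B₁ ∩ {y > 0} and neither of the two segments {(x,0) : 0 < x < 1}, {(x,0) : −1 < x < 0}. Suppose ∂S ∩ B₁⁺ = γ₂ ∪ γ₃ with H¹(γ₂) ≥ H¹(γ₃), and σ₁₂, σ₁₃, σ₂₃ > 0 satisfy the strict triangle inequality σ₂₃ < σ₁₂ + σ₁₃. Then σ₂₃·H¹(γ₃) − σ₁₂·H¹(γ₂) − σ₁₃·H¹(γ₃) < 0. -/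

import Mathlib

open Real MeasureTheory Metric Set
open scoped ENNReal NNReal

noncomputable section

/-- The open upper half unit disk `B₁⁺`. -/
def halfDisk : Set (EuclideanSpace ℝ (Fin 2)) := {z | ‖z‖ < 1 ∧ 0 < z 1}

/-- The open upper unit semicircle `∂B₁ ∩ {y > 0}`. -/
def upperSemicircle : Set (EuclideanSpace ℝ (Fin 2)) := {z | ‖z‖ = 1 ∧ 0 < z 1}

/-- The segment `{(x,0) : 0 < x < 1}`. -/
def posSegment : Set (EuclideanSpace ℝ (Fin 2)) := {z | z 1 = 0 ∧ 0 < z 0 ∧ z 0 < 1}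

/-- The segment `{(x,0) : −1 < x < 0}`. -/
def negSegment : Set (EuclideanSpace ℝ (Fin 2)) := {z | z 1 = 0 ∧ -1 < z 0 ∧ z 0 < 0}


abbrev E2 := EuclideanSpace ℝ (Fin 2)

lemma abs_sin_sub (a b : ℝ) : |sin a - sin b| ≤ |a - b| := by
  rw [Real.sin_sub_sin]
  have h1 : |2 * sin ((a-b)/2) * cos ((a+b)/2)| = 2 * |sin ((a-b)/2)| * |cos ((a+b)/2)| := by
    rw [abs_mul, abs_mul, abs_two]
  rw [h1]
  have h2 : |sin ((a-b)/2)| ≤ |(a-b)/2| := abs_sin_le_abs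
  have h3 : |cos ((a+b)/2)| ≤ 1 := abs_cos_le_one _
  have h4 : |(a-b)/2| = |a-b|/2 := by rw [abs_div, abs_two]
  nlinarith [abs_nonneg (sin ((a-b)/2)), abs_nonneg (cos ((a+b)/2)), abs_nonneg (a-b)]

lemma abs_cos_sub (a b : ℝ) : |cos a - cos b| ≤ |a - b| := by
  rw [Real.cos_sub_cos]
  have h1 : |-2 * sin ((a+b)/2) * sin ((a-b)/2)| = 2 * |sin ((a+b)/2)| * |sin ((a-b)/2)| := by
    rw [abs_mul, abs_mul]; norm_num
  rw [h1]
  have h2 : |sin ((a-b)/2)| ≤ |(a-b)/2| := abs_sin_le_abs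
  have h3 : |sin ((a+b)/2)| ≤ 1 := abs_sin_le_one _
  have h4 : |(a-b)/2| = |a-b|/2 := by rw [abs_div, abs_two]
  nlinarith [abs_nonneg (sin ((a+b)/2)), abs_nonneg (sin ((a-b)/2)), abs_nonneg (a-b)]
def uvec (θ : ℝ) : E2 :=
  cos θ • EuclideanSpace.single (0 : Fin 2) (1:ℝ) + sin θ • EuclideanSpace.single (1 : Fin 2) (1:ℝ)
lemma uvec_apply0 (θ : ℝ) : uvec θ 0 = cos θ := by simp [uvec, EuclideanSpace.single_apply]
lemma uvec_apply1 (θ : ℝ) : uvec θ 1 = sin θ := by simp [uvec, EuclideanSpace.single_apply]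
lemma norm_eq_two (z : E2) : ‖z‖ = Real.sqrt ((z 0)^2 + (z 1)^2) := by
  rw [EuclideanSpace.norm_eq]; congr 1; rw [Fin.sum_univ_two]; simp [Real.norm_eq_abs, sq_abs]

lemma abs_coord_le (z : E2) (i : Fin 2) : |z i| ≤ ‖z‖ := by
  rw [EuclideanSpace.norm_eq]
  have h1 : |z i| = Real.sqrt (‖z i‖ ^ 2) := by
    rw [Real.sqrt_sq_eq_abs]; simp [abs_abs, Real.norm_eq_abs]
  rw [h1]
  apply Real.sqrt_le_sqrt
  exact Finset.single_le_sum (f := fun j => ‖z j‖ ^ 2) (fun j _ => by positivity) (Finset.mem_univ i)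

lemma uvec_norm (θ : ℝ) : ‖uvec θ‖ = 1 := by
  rw [norm_eq_two, uvec_apply0, uvec_apply1, cos_sq_add_sin_sq]
  exact Real.sqrt_one

lemma sub_apply' (z w : E2) (i : Fin 2) : (z - w) i = z i - w i := rfl
lemma add_apply' (z w : E2) (i : Fin 2) : (z + w) i = z i + w i := rfl
lemma smul_apply' (c : ℝ) (z : E2) (i : Fin 2) : (c • z) i = c * z i := rfl

lemma uvec_dist (θ θ' : ℝ) : ‖uvec θ - uvec θ'‖ ≤ 2 * |θ - θ'| := by
  rw [norm_eq_two, sub_apply', sub_apply', uvec_apply0, uvec_apply1, uvec_apply0, uvec_apply1]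
  have h1 := abs_cos_sub θ θ'
  have h2 := abs_sin_sub θ θ'
  have : (cos θ - cos θ')^2 + (sin θ - sin θ')^2 ≤ (2*|θ - θ'|)^2 := by
    have e1 : (cos θ - cos θ')^2 ≤ |θ - θ'|^2 := by
      rw [← sq_abs (cos θ - cos θ')]; gcongr
    have e2 : (sin θ - sin θ')^2 ≤ |θ - θ'|^2 := by
      rw [← sq_abs (sin θ - sin θ')]; gcongr
    nlinarith [abs_nonneg (θ - θ')]
  calc Real.sqrt ((cos θ - cos θ')^2 + (sin θ - sin θ')^2) ≤ Real.sqrt ((2*|θ-θ'|)^2) :=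
        Real.sqrt_le_sqrt this
    _ = 2*|θ - θ'| := by rw [Real.sqrt_sq (by positivity)]

lemma uvec_surj (u : E2) (hu : ‖u‖ = 1) : ∃ θ ∈ Icc (-π) π, uvec θ = u := by
  have hsum : (u 0)^2 + (u 1)^2 = 1 := by
    have := norm_eq_two u
    rw [hu] at this
    have h := this.symm
    nlinarith [Real.sq_sqrt (by positivity : (0:ℝ) ≤ (u 0)^2 + (u 1)^2), Real.sqrt_nonneg ((u 0)^2 + (u 1)^2)]
  have ha1 : -1 ≤ u 0 := by nlinarith
  have ha2 : u 0 ≤ 1 := by nlinarith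
  set θ : ℝ := if 0 ≤ u 1 then arccos (u 0) else -arccos (u 0) with hθ
  have hrange : θ ∈ Icc (-π) π := by
    have h1 := Real.arccos_nonneg (u 0)
    have h2 := Real.arccos_le_pi (u 0)
    by_cases h : 0 ≤ u 1 <;> simp [hθ, h] <;> constructor <;> nlinarith [Real.pi_pos]
  refine ⟨θ, hrange, ?_⟩
  have hcos : cos θ = u 0 := by
    by_cases h : 0 ≤ u 1 <;> simp [hθ, h, Real.cos_arccos ha1 ha2]
  have hsin : sin θ = u 1 := by
    have hs : sin (arccos (u 0)) = Real.sqrt (1 - (u 0)^2) := Real.sin_arccos _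
    have h1 : Real.sqrt (1 - (u 0)^2) = |u 1| := by
      rw [show 1 - (u 0)^2 = (u 1)^2 by nlinarith, Real.sqrt_sq_eq_abs]
    by_cases h : 0 ≤ u 1
    · simp [hθ, h, hs, h1, abs_of_nonneg h]
    · push_neg at h
      simp [hθ, not_le.2 h, hs, h1, abs_of_neg h]
  ext i
  match i with
  | 0 => rw [uvec_apply0]; exact hcos
  | 1 => rw [uvec_apply1]; exact hsin

lemma combo_mem_closure {S : Set E2} (hconv : Convex ℝ S) {p : E2} {ε : ℝ}
    (hball : closedBall p ε ⊆ closure S) {x : E2} (hx : x ∈ closure S)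
    {s : ℝ} (hs0 : 0 ≤ s) (hs1 : s ≤ 1) {z : E2}
    (hz : dist z (p + s • (x - p)) ≤ (1 - s) * ε) : z ∈ closure S := by
  rcases eq_or_lt_of_le hs1 with rfl | hs1
  · have : dist z (p + (1:ℝ) • (x - p)) ≤ 0 := by simpa using hz
    have hzx : z = p + (1:ℝ) • (x - p) := by
      have := dist_nonneg (x := z) (y := p + (1:ℝ) • (x - p))
      have : dist z (p + (1:ℝ) • (x - p)) = 0 := le_antisymm ‹_› ‹_›
      exact dist_eq_zero.1 this
    rw [hzx]; simpa using hx
  · set w : E2 := (1 - s)⁻¹ • (z - s • x) with hw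
    have hs1' : (0:ℝ) < 1 - s := by linarith
    have hwball : w ∈ closedBall p ε := by
      rw [mem_closedBall, dist_eq_norm]
      have hkey : w - p = (1 - s)⁻¹ • (z - (p + s • (x - p))) := by
        rw [hw]
        have hne : (1:ℝ) - s ≠ 0 := by linarith
        match_scalars <;> field_simp <;> ring
      rw [hkey, norm_smul]
      rw [Real.norm_eq_abs, abs_of_pos (by positivity)]
      rw [← dist_eq_norm] at *
      calc (1-s)⁻¹ * dist z (p + s • (x - p)) ≤ (1-s)⁻¹ * ((1-s)*ε) := by
            gcongr
        _ = ε := by field_simp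
    have hzeq : z = s • x + (1 - s) • w := by
      rw [hw, smul_smul]
      field_simp
      rw [one_smul]; abel
    rw [hzeq]
    exact hconv.closure hx (hball hwball) hs0 hs1'.le (by ring)

lemma mem_of_closedBall_subset_closure {S : Set E2} (hconv : Convex ℝ S) (hopen : IsOpen S)
    {q : E2} (hq : q ∈ S) {x : E2} {r : ℝ} (hr : 0 < r)
    (h : closedBall x r ⊆ closure S) : x ∈ S := by
  rcases eq_or_ne x q with rfl | hxq
  · exact hq
  · have hnorm : 0 < ‖x - q‖ := by
      rw [norm_pos_iff, sub_ne_zero]; exact hxq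
    set η : ℝ := r / ‖x - q‖ with hη
    have hη0 : 0 < η := by positivity
    set y : E2 := x + η • (x - q) with hy
    have hyball : y ∈ closedBall x r := by
      rw [mem_closedBall, dist_eq_norm]
      have : y - x = η • (x - q) := by rw [hy]; abel
      rw [this, norm_smul, Real.norm_eq_abs, abs_of_pos hη0, hη]
      field_simp
      exact le_rfl
    have hyc : y ∈ closure S := h hyball
    have hxc : x = (η/(1+η)) • q + (1/(1+η)) • y := by
      rw [hy]
      have h1 : (1:ℝ) + η ≠ 0 := by positivity
      match_scalars <;> field_simp <;> ring
    have := hconv.combo_interior_closure_mem_interior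
      (by rw [hopen.interior_eq]; exact hq) hyc
      (by positivity : (0:ℝ) < η/(1+η)) (by positivity : (0:ℝ) ≤ 1/(1+η))
      (by field_simp; ring)
    rw [hopen.interior_eq] at this
    rw [hxc]; exact this

lemma segment_crosses_frontier {S : Set E2} {a b : E2}
    (ha : a ∈ S) (hb : b ∉ closure S) (hopen : IsOpen S) :
    ∃ z ∈ segment ℝ a b, z ∈ frontier S := by
  by_contra hcon
  push_neg at hcon
  have hconn : IsPreconnected (segment ℝ a b) := (convex_segment a b).isPreconnected
  have hf : frontier S = closure S \ S := hopen.frontier_eq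
  have hcover : segment ℝ a b ⊆ interior S ∪ (closure S)ᶜ := by
    intro z hz
    have hzf := hcon z hz
    rw [hf] at hzf
    by_cases hzc : z ∈ closure S
    · left
      rw [hopen.interior_eq]
      by_contra hzs
      exact hzf ⟨hzc, hzs⟩
    · right; exact hzc
  obtain ⟨z, hzseg, hzi, hzc⟩ := hconn (interior S) (closure S)ᶜ isOpen_interior
    isClosed_closure.isOpen_compl hcover
    ⟨a, left_mem_segment ℝ a b, by rw [hopen.interior_eq]; exact ha⟩
    ⟨b, right_mem_segment ℝ a b, hb⟩
  exact hzc (subset_closure (interior_subset hzi))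

set_option maxHeartbeats 1000000 in
lemma frontier_measure_lt_top {S : Set E2} (hconv : Convex ℝ S) (hopen : IsOpen S)
    {p : E2} {ε : ℝ} (hε : 0 < ε) (hball : closedBall p ε ⊆ S)
    (hbound : S ⊆ ball 0 1) : μH[1] (frontier S) < ⊤ := by
  have hballc : closedBall p ε ⊆ closure S := hball.trans subset_closure
  have hSc : closure S ⊆ closedBall 0 1 :=
    closure_minimal (hbound.trans ball_subset_closedBall) Metric.isClosed_closedBall
  have hpS : p ∈ S := hball (mem_closedBall_self hε.le)
  have hp1 : ‖p‖ ≤ 1 := by simpa using hSc (subset_closure hpS)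
  set A : E2 → Set ℝ := fun u => {t : ℝ | 0 ≤ t ∧ p + t • u ∈ closure S} with hA
  have hA0 : ∀ u, (0:ℝ) ∈ A u := fun u => ⟨le_refl 0, by simpa using subset_closure hpS⟩
  have hAbd : ∀ u, ‖u‖ = 1 → A u ⊆ Icc 0 2 := by
    intro u hu t ht
    refine ⟨ht.1, ?_⟩
    have h1 : ‖p + t • u‖ ≤ 1 := by simpa using hSc ht.2
    have h2 : ‖t • u‖ ≤ ‖p + t • u‖ + ‖p‖ := by
      have := norm_sub_le (p + t • u) p
      simpa using this
    rw [norm_smul, Real.norm_eq_abs, hu, mul_one, abs_of_nonneg ht.1] at h2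
    linarith
  have hAcl : ∀ u, IsClosed (A u) := by
    intro u
    have heq : A u = Ici 0 ∩ ((fun t : ℝ => p + t • u) ⁻¹' closure S) := by
      ext t; simp [hA, mem_Ici]
    rw [heq]
    exact isClosed_Ici.inter (IsClosed.preimage (by continuity) isClosed_closure)
  set f : E2 → ℝ := fun u => sSup (A u) with hf
  have hAbb : ∀ u, ‖u‖ = 1 → BddAbove (A u) := fun u hu =>
    ⟨2, fun t ht => (hAbd u hu ht).2⟩
  have hfmem : ∀ u, ‖u‖ = 1 → f u ∈ A u := by
    intro u hu
    have hcpt : IsCompact (A u) := isCompact_Icc.of_isClosed_subset (hAcl u) (hAbd u hu)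
    exact hcpt.sSup_mem ⟨0, hA0 u⟩
  have hfub : ∀ u, ‖u‖ = 1 → f u ≤ 2 := fun u hu => (hAbd u hu (hfmem u hu)).2
  have hflb : ∀ u, ‖u‖ = 1 → ε ≤ f u := by
    intro u hu
    have hmem : ε ∈ A u := by
      refine ⟨hε.le, hballc ?_⟩
      rw [mem_closedBall, dist_eq_norm]
      have : p + ε • u - p = ε • u := by abel
      rw [this, norm_smul, Real.norm_eq_abs, hu, mul_one, abs_of_pos hε]
    exact le_csSup (hAbb u hu) hmem
  have hflip : ∀ u v, ‖u‖ = 1 → ‖v‖ = 1 → f u - f v ≤ 4/ε * ‖u - v‖ := by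
    intro u v hu hv
    set δ := ‖u - v‖ with hδdef
    have hδ : 0 ≤ δ := norm_nonneg _
    have hfu : ε ≤ f u := hflb u hu
    have hfu2 : f u ≤ 2 := hfub u hu
    have hfu0 : 0 < f u := lt_of_lt_of_le hε hfu
    have hden : 0 < ε + f u * δ := by nlinarith
    set t := ε * f u / (ε + f u * δ) with htdef
    have ht0 : 0 ≤ t := by positivity
    have hts : t ≤ f u := by
      rw [div_le_iff₀ hden]; nlinarith [mul_nonneg (mul_nonneg hfu0.le hfu0.le) hδ]
    have htA : t ∈ A v := by
      refine ⟨ht0, ?_⟩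
      have hs0 : 0 ≤ t / f u := by positivity
      have hs1 : t / f u ≤ 1 := by rw [div_le_one hfu0]; exact hts
      have hcen : p + (t / f u) • ((p + f u • u) - p) = p + t • u := by
        have : (p + f u • u) - p = f u • u := by abel
        rw [this, smul_smul, div_mul_cancel₀ _ (ne_of_gt hfu0)]
      have hdist : dist (p + t • v) (p + (t / f u) • ((p + f u • u) - p)) = t * δ := by
        rw [hcen, dist_eq_norm]
        have : p + t • v - (p + t • u) = t • (v - u) := by
          rw [smul_sub]; abel
        rw [this, norm_smul, Real.norm_eq_abs, abs_of_nonneg ht0, norm_sub_rev]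
      have hgoal : t * δ ≤ (1 - t / f u) * ε := by
        have : (1 - t / f u) * ε = t * δ := by
          rw [htdef]; field_simp; ring
        linarith [this.ge]
      exact combo_mem_closure hconv hballc (hfmem u hu).2 hs0 hs1 (by rw [hdist]; exact hgoal)
    have htf : t ≤ f v := le_csSup (hAbb v hv) htA
    have h1 : (f u - t) * (ε + f u * δ) = f u * f u * δ * ε / (ε + f u * δ) * ((ε + f u * δ)/ε) := by
      rw [htdef]; field_simp; ring
    -- f u - t = f u ^ 2 * δ / (ε + f u * δ)
    have h2 : f u - t = f u * f u * δ / (ε + f u * δ) := by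
      rw [htdef]; field_simp; ring
    have h3 : f u * f u * δ / (ε + f u * δ) ≤ 4 / ε * δ := by
      rw [div_le_iff₀ hden]
      have h4 : 4 / ε * δ * (ε + f u * δ) = 4 * δ + 4 / ε * δ * (f u * δ) := by
        field_simp
      rw [h4]
      have h5 : f u * f u * δ ≤ 4 * δ := by nlinarith [mul_nonneg hδ (mul_nonneg (sub_nonneg.2 hfu2) (by linarith : (0:ℝ) ≤ 2 + f u))]
      have h6 : 0 ≤ 4 / ε * δ * (f u * δ) := by positivity
      linarith
    linarith [h2 ▸ h3]
  set Φ : ℝ → E2 := fun θ => p + f (uvec θ) • uvec θ with hΦ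
  have hΦdist : ∀ θ θ', dist (Φ θ) (Φ θ') ≤ ((4/ε + 2) * 2) * dist θ θ' := by
    intro θ θ'
    have hu := uvec_norm θ
    have hu' := uvec_norm θ'
    have habs : |f (uvec θ) - f (uvec θ')| ≤ 4/ε * ‖uvec θ - uvec θ'‖ := by
      rw [abs_sub_le_iff]
      refine ⟨hflip _ _ hu hu', ?_⟩
      rw [norm_sub_rev]; exact hflip _ _ hu' hu
    have hdecomp : Φ θ - Φ θ' =
        (f (uvec θ) - f (uvec θ')) • uvec θ + f (uvec θ') • (uvec θ - uvec θ') := by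
      simp only [hΦ]; module
    have hεpos : (0:ℝ) ≤ 4/ε + 2 := by positivity
    calc dist (Φ θ) (Φ θ') = ‖Φ θ - Φ θ'‖ := dist_eq_norm _ _
      _ ≤ ‖(f (uvec θ) - f (uvec θ')) • uvec θ‖ + ‖f (uvec θ') • (uvec θ - uvec θ')‖ := by
          rw [hdecomp]; exact norm_add_le _ _
      _ ≤ 4/ε * ‖uvec θ - uvec θ'‖ + 2 * ‖uvec θ - uvec θ'‖ := by
          have e1 : ‖(f (uvec θ) - f (uvec θ')) • uvec θ‖ = |f (uvec θ) - f (uvec θ')| := by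
            rw [norm_smul, Real.norm_eq_abs, hu, mul_one]
          have e2 : ‖f (uvec θ') • (uvec θ - uvec θ')‖ ≤ 2 * ‖uvec θ - uvec θ'‖ := by
            rw [norm_smul, Real.norm_eq_abs,
              abs_of_pos (lt_of_lt_of_le hε (hflb _ hu'))]
            exact mul_le_mul_of_nonneg_right (hfub _ hu') (norm_nonneg _)
          rw [e1]
          exact add_le_add habs e2
      _ = (4/ε + 2) * ‖uvec θ - uvec θ'‖ := by ring
      _ ≤ (4/ε + 2) * (2 * |θ - θ'|) := by
          exact mul_le_mul_of_nonneg_left (uvec_dist θ θ') hεpos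
      _ = ((4/ε + 2) * 2) * dist θ θ' := by rw [Real.dist_eq]; ring
  set K : NNReal := Real.toNNReal ((4/ε + 2) * 2) with hKdef
  have hK : LipschitzWith K Φ := by
    apply LipschitzWith.of_dist_le_mul
    intro x y
    rw [hKdef, Real.coe_toNNReal _ (by positivity)]
    exact hΦdist x y
  have hcover : frontier S ⊆ Φ '' (Icc (-π) π) := by
    intro x hx
    have hxc : x ∈ closure S := frontier_subset_closure hx
    have hxS : x ∉ S := by
      rw [hopen.frontier_eq] at hx; exact hx.2
    have hxp : ε ≤ ‖x - p‖ := by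
      by_contra hcon; push_neg at hcon
      exact hxS (hball (by rw [mem_closedBall, dist_eq_norm]; linarith))
    have hr0 : 0 < ‖x - p‖ := lt_of_lt_of_le hε hxp
    set r := ‖x - p‖ with hrdef
    set u := r⁻¹ • (x - p) with hu
    have hun : ‖u‖ = 1 := by
      rw [hu, norm_smul, Real.norm_eq_abs, abs_of_pos (by positivity), ← hrdef]
      field_simp
    have hxu : p + r • u = x := by
      rw [hu, smul_smul, mul_inv_cancel₀ (ne_of_gt hr0), one_smul]
      abel
    have hrA : r ∈ A u := ⟨hr0.le, by rw [hxu]; exact hxc⟩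
    have hfr : r ≤ f u := le_csSup (hAbb u hun) hrA
    have hfu0 : 0 < f u := lt_of_lt_of_le hε (hflb u hun)
    have hfreq : f u = r := by
      rcases eq_or_lt_of_le hfr with heq | hlt
      · exact heq.symm
      · exfalso
        have hs0 : 0 ≤ r / f u := by positivity
        have hs1 : r / f u ≤ 1 := by rw [div_le_one hfu0]; exact hfr
        have hslt : r / f u < 1 := by rw [div_lt_one hfu0]; exact hlt
        have hrad : 0 < (1 - r / f u) * ε := by nlinarith
        have hsub : closedBall x ((1 - r / f u) * ε) ⊆ closure S := by
          intro z hz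
          apply combo_mem_closure hconv hballc (hfmem u hun).2 hs0 hs1
          have hcen : p + (r / f u) • ((p + f u • u) - p) = x := by
            have h1 : (p + f u • u) - p = f u • u := by abel
            rw [h1, smul_smul, div_mul_cancel₀ _ (ne_of_gt hfu0)]
            exact hxu
          rw [hcen]
          exact hz
        exact hxS (mem_of_closedBall_subset_closure hconv hopen hpS hrad hsub)
    obtain ⟨θ, hθ, huθ⟩ := uvec_surj u hun
    refine ⟨θ, hθ, ?_⟩
    simp only [hΦ]
    rw [huθ, hfreq, hxu]
  calc μH[1] (frontier S) ≤ μH[1] (Φ '' (Icc (-π) π)) := measure_mono hcover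
    _ ≤ (K : ℝ≥0∞) ^ (1:ℝ) * μH[1] (Icc (-π) π) :=
        hK.hausdorffMeasure_image_le (by norm_num) _
    _ < ⊤ := by
        rw [ENNReal.rpow_one, MeasureTheory.hausdorffMeasure_real, Real.volume_Icc]
        exact ENNReal.mul_lt_top ENNReal.coe_lt_top ENNReal.ofReal_lt_top

lemma proj_lipschitz : LipschitzWith 1 (fun z : E2 => z 0) := by
  apply LipschitzWith.of_dist_le_mul
  intro x y
  rw [Real.dist_eq, NNReal.coe_one, one_mul, dist_eq_norm]
  have : x 0 - y 0 = (x - y) 0 := (sub_apply' x y 0).symm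
  rw [this]
  exact abs_coord_le (x - y) 0

set_option maxHeartbeats 1000000 in
lemma frontier_pos {S : Set E2} (hopen : IsOpen S)
    {p : E2} {ε : ℝ} (hε : 0 < ε) (hball : ball p ε ⊆ S)
    (hsub : S ⊆ {z : E2 | ‖z‖ < 1 ∧ 0 < z 1}) :
    ENNReal.ofReal (2*ε) ≤ μH[1] (frontier S ∩ {z : E2 | 0 < z 1}) := by
  have hpS : p ∈ S := hball (mem_ball_self hε)
  have hp1 : 0 < p 1 := (hsub hpS).2
  have hSc : closure S ⊆ closedBall 0 1 := by
    apply closure_minimal _ Metric.isClosed_closedBall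
    intro z hz
    exact ball_subset_closedBall (mem_ball_zero_iff.2 (hsub hz).1)
  set E := frontier S ∩ {z : E2 | 0 < z 1} with hE
  have hsubset : Ioo (p 0 - ε) (p 0 + ε) ⊆ (fun z : E2 => z 0) '' E := by
    rintro c ⟨hc1, hc2⟩
    set t : ℝ := c - p 0 with ht
    set e0 : E2 := EuclideanSpace.single (0 : Fin 2) (1:ℝ) with he0
    set e1 : E2 := EuclideanSpace.single (1 : Fin 2) (1:ℝ) with he1
    set a : E2 := p + t • e0 with ha
    have haS : a ∈ S := by
      apply hball
      rw [mem_ball, dist_eq_norm]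
      have : a - p = t • e0 := by rw [ha]; abel
      rw [this, norm_smul, Real.norm_eq_abs, he0, EuclideanSpace.norm_single]
      rw [norm_one, mul_one, abs_lt]
      constructor <;> [linarith; linarith]
    have ha0 : a 0 = c := by
      rw [ha, add_apply', smul_apply', he0]
      simp [EuclideanSpace.single_apply, ht]
    have ha1 : a 1 = p 1 := by
      rw [ha, add_apply', smul_apply', he0]
      simp [EuclideanSpace.single_apply]
    set b : E2 := a + (3:ℝ) • e1 with hb
    have hb0 : b 0 = c := by
      rw [hb, add_apply', smul_apply', he1]
      simp [EuclideanSpace.single_apply, ha0]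
    have hb1 : b 1 = p 1 + 3 := by
      rw [hb, add_apply', smul_apply', he1]
      simp [EuclideanSpace.single_apply, ha1]
    have hbnc : b ∉ closure S := by
      intro hcon
      have h1 : ‖b‖ ≤ 1 := by simpa using hSc hcon
      have h2 : |b 1| ≤ ‖b‖ := abs_coord_le b 1
      rw [hb1] at h2
      have := le_abs_self (p 1 + 3)
      linarith
    obtain ⟨z, hzseg, hzf⟩ := segment_crosses_frontier haS hbnc hopen
    obtain ⟨α, β, hα, hβ, hαβ, hzeq⟩ := hzseg
    have hz0 : z 0 = c := by
      rw [← hzeq, add_apply', smul_apply', smul_apply', ha0, hb0]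
      linear_combination c * hαβ
    have hz1 : 0 < z 1 := by
      rw [← hzeq, add_apply', smul_apply', smul_apply', ha1, hb1]
      have heq : α * (p 1) + β * (p 1 + 3) = p 1 + 3*β := by
        linear_combination (p 1) * hαβ
      rw [heq]
      linarith
    exact ⟨z, ⟨hzf, hz1⟩, hz0⟩
  calc ENNReal.ofReal (2*ε) = volume (Ioo (p 0 - ε) (p 0 + ε)) := by
        rw [Real.volume_Ioo]; congr 1; ring
    _ = μH[1] (Ioo (p 0 - ε) (p 0 + ε)) := by rw [MeasureTheory.hausdorffMeasure_real]
    _ ≤ μH[1] ((fun z : E2 => z 0) '' E) := measure_mono hsubset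
    _ ≤ (1 : ℝ≥0∞) ^ (1:ℝ) * μH[1] E := by
        simpa using proj_lipschitz.hausdorffMeasure_image_le (by norm_num : (0:ℝ) ≤ 1) E
    _ = μH[1] E := by simp

/-- If a nonempty convex open `S ⊆ B₁⁺` has boundary meeting `∂B₁⁺` in no arc
of positive length on the semicircle and containing neither boundary segment,
and `∂S ∩ B₁⁺ = γ₂ ∪ γ₃` with `H¹(γ₂) ≥ H¹(γ₃)`, then under the strict
triangle inequality `σ₂₃ < σ₁₂ + σ₁₃` relabeling decreases the energy:
`σ₂₃·H¹(γ₃) − σ₁₂·H¹(γ₂) − σ₁₃·H¹(γ₃) < 0`. -/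
theorem stmt_18 (S γ₂ γ₃ : Set (EuclideanSpace ℝ (Fin 2)))
    (hSne : S.Nonempty) (hSconv : Convex ℝ S) (hSopen : IsOpen S)
    (hSsub : S ⊆ halfDisk)
    (hnoarc : μH[1] (frontier S ∩ upperSemicircle) = 0)
    (hnopos : ¬ posSegment ⊆ frontier S)
    (hnoneg : ¬ negSegment ⊆ frontier S)
    (hbdry : frontier S ∩ halfDisk = γ₂ ∪ γ₃)
    (hlen : μH[1] γ₂ ≥ μH[1] γ₃)
    (σ₁₂ σ₁₃ σ₂₃ : ℝ) (h12 : 0 < σ₁₂) (h13 : 0 < σ₁₃) (h23 : 0 < σ₂₃)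
    (htri : σ₂₃ < σ₁₂ + σ₁₃) :
    σ₂₃ * (μH[1] γ₃).toReal - σ₁₂ * (μH[1] γ₂).toReal -
      σ₁₃ * (μH[1] γ₃).toReal < 0 := by

  classical
  obtain ⟨p, hpS⟩ := hSne
  obtain ⟨ε, hε, hball⟩ := Metric.isOpen_iff.1 hSopen p hpS
  have hSsub' : S ⊆ {z : E2 | ‖z‖ < 1 ∧ 0 < z 1} := hSsub
  have hSball : S ⊆ ball 0 1 := fun z hz => mem_ball_zero_iff.2 (hSsub hz).1
  have hcball : closedBall p (ε/2) ⊆ S := by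
    intro z hz
    exact hball (lt_of_le_of_lt (mem_closedBall.1 hz) (by linarith))
  have hfin : μH[1] (frontier S) < ⊤ :=
    frontier_measure_lt_top hSconv hSopen (by positivity : (0:ℝ) < ε/2) hcball hSball
  have hpos : ENNReal.ofReal (2*ε) ≤ μH[1] (frontier S ∩ {z : E2 | 0 < z 1}) :=
    frontier_pos hSopen hε hball hSsub'
  have hsplit : frontier S ∩ {z : E2 | 0 < z 1} ⊆
      (frontier S ∩ halfDisk) ∪ (frontier S ∩ upperSemicircle) := by
    rintro z ⟨hzf, hz1⟩
    have hcl : closure S ⊆ closedBall 0 1 :=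
      closure_minimal (hSball.trans ball_subset_closedBall) Metric.isClosed_closedBall
    have hzc : ‖z‖ ≤ 1 := by simpa using hcl (frontier_subset_closure hzf)
    rcases lt_or_eq_of_le hzc with h | h
    · exact Or.inl ⟨hzf, h, hz1⟩
    · exact Or.inr ⟨hzf, h, hz1⟩
  have hEbound : ENNReal.ofReal (2*ε) ≤ μH[1] (γ₂ ∪ γ₃) := by
    calc ENNReal.ofReal (2*ε) ≤ μH[1] (frontier S ∩ {z : E2 | 0 < z 1}) := hpos
      _ ≤ μH[1] ((frontier S ∩ halfDisk) ∪ (frontier S ∩ upperSemicircle)) :=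
          measure_mono hsplit
      _ ≤ μH[1] (frontier S ∩ halfDisk) + μH[1] (frontier S ∩ upperSemicircle) :=
          measure_union_le _ _
      _ = μH[1] (γ₂ ∪ γ₃) + 0 := by rw [hbdry, hnoarc]
      _ = μH[1] (γ₂ ∪ γ₃) := add_zero _
  have hunion : γ₂ ∪ γ₃ ⊆ frontier S := by
    rw [← hbdry]; exact inter_subset_left
  have h2fin : μH[1] γ₂ ≠ ⊤ :=
    ne_top_of_le_ne_top hfin.ne (measure_mono fun z hz => hunion (Or.inl hz))
  have h3fin : μH[1] γ₃ ≠ ⊤ :=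
    ne_top_of_le_ne_top hfin.ne (measure_mono fun z hz => hunion (Or.inr hz))
  have hne : μH[1] γ₂ ≠ 0 := by
    intro h0
    have h3 : μH[1] γ₃ = 0 := le_antisymm (h0 ▸ hlen) (by simp)
    have : μH[1] (γ₂ ∪ γ₃) = 0 := le_antisymm
      (le_trans (measure_union_le _ _) (by simp [h0, h3])) (by simp)
    rw [this] at hEbound
    have h2ε : (0:ℝ≥0∞) < ENNReal.ofReal (2*ε) := ENNReal.ofReal_pos.2 (by linarith)
    exact (lt_irrefl _ (lt_of_lt_of_le h2ε hEbound)).elim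
  set a : ℝ := (μH[1] γ₂).toReal with hadef
  set b : ℝ := (μH[1] γ₃).toReal with hbdef
  have ha : 0 < a := ENNReal.toReal_pos hne h2fin
  have hb0 : 0 ≤ b := ENNReal.toReal_nonneg
  have hba : b ≤ a := (ENNReal.toReal_le_toReal h3fin h2fin).2 hlen
  rcases eq_or_lt_of_le hb0 with hb | hb
  · rw [← hb]
    have : σ₂₃ * 0 - σ₁₂ * a - σ₁₃ * 0 = -(σ₁₂ * a) := by ring
    rw [this]
    have := mul_pos h12 ha
    linarith
  · nlinarith [mul_pos (show (0:ℝ) < σ₁₂ + σ₁₃ - σ₂₃ by linarith) hb,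
      mul_nonneg h12.le (sub_nonneg.2 hba)]

end
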